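/- Let n ≥ 2. There exists a constant c > 0 depending only on n such that for every measurable radial function f : ℝⁿ → ℂ (i.e. f(x) = f(y) whenever ‖x‖ = ‖y‖), every ρ > 0, every r with 0 < r ≤ ρ/2, and every x₀ ∈ ℝⁿ with ‖x₀‖ = ρ, one has ∫_{{x : ρ−r ≤ ‖x‖ ≤ ρ+r}} |f(x)|² dx ≥ c · (ρ/r)^{n−1} · ∫_{B(x₀, r)} |f(x)|² dx, where B(x₀,r) is the Euclidean ball of radius r centered at x₀. -/

import Mathlib

open MeasureTheory Set
open scoped ENNReal NNReal

noncomputable section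

abbrev En (n : ℕ) := EuclideanSpace ℝ (Fin n)

lemma packing {n : ℕ} (hn : 2 ≤ n) {ρ r : ℝ} (hρ : 0 < ρ) (hr : 0 < r) (hrρ : r ≤ ρ / 2) :
    ∃ T : Finset (En n), (∀ x ∈ T, ‖x‖ = ρ) ∧
      ((T : Set (En n)).Pairwise fun x y => 2 * r ≤ dist x y) ∧
      (1 / 6 : ℝ) ^ n * (ρ / r) ^ (n - 1) ≤ T.card := by
  have hb : 0 < ρ - r := by linarith
  -- Zorn: a maximal 2r-separated subset of the sphere of radius ρ
  set S : Set (Set (En n)) :=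
    {T | (∀ x ∈ T, ‖x‖ = ρ) ∧ T.Pairwise fun x y => 2 * r ≤ dist x y} with hS_def
  obtain ⟨M, -, hMS, hMmax⟩ : ∃ M, ∅ ⊆ M ∧ Maximal (· ∈ S) M := by
    refine zorn_subset_nonempty S ?_ ∅ ⟨by simp, Set.pairwise_empty _⟩
    intro c hcS hchain hcne
    refine ⟨⋃₀ c, ⟨?_, ?_⟩, fun s hs => Set.subset_sUnion_of_mem hs⟩
    · rintro x ⟨s, hs, hxs⟩
      exact (hcS hs).1 x hxs
    · rintro x ⟨s, hs, hxs⟩ y ⟨t, ht, hyt⟩ hxy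
      rcases hchain.total hs ht with hst | hts
      · exact (hcS ht).2 (hst hxs) hyt hxy
      · exact (hcS hs).2 hxs (hts hyt) hxy
  obtain ⟨hMsphere, hMsep⟩ := hMS
  have hsymm : Symmetric fun x y : En n => 2 * r ≤ dist x y := by
    intro x y hxy; rwa [dist_comm]
  -- pairwise disjoint balls of radius r around points of M
  have hdisj : (M : Set (En n)).Pairwise fun x y =>
      Disjoint (Metric.ball x r) (Metric.ball y r) := by
    intro x hx y hy hxy
    exact Metric.ball_disjoint_ball (by linarith [hMsep hx hy hxy])
  -- M is finite
  have hMfin : M.Finite := by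
    rw [← Set.finite_coe_iff]
    have hfin := MeasureTheory.Measure.finite_const_le_meas_of_disjoint_iUnion
      (volume : Measure (En n)) (ε := volume (Metric.ball (0 : En n) r))
      (As := fun i : M => Metric.ball (i : En n) r)
      (Metric.measure_ball_pos volume 0 hr) (fun i => Metric.isOpen_ball.measurableSet)
      (fun i j hij => hdisj i.2 j.2 (fun h => hij (Subtype.ext h)))
      ?_
    · have : {i : M | volume (Metric.ball (0 : En n) r)
          ≤ volume (Metric.ball (i : En n) r)} = Set.univ := by
        refine Set.eq_univ_of_forall fun i => ?_
        simp [Measure.addHaar_ball_center]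
      rw [this, Set.finite_univ_iff] at hfin
      exact hfin
    · refine ne_top_of_le_ne_top (measure_ball_lt_top (x := (0 : En n))
        (r := ρ + r)).ne (measure_mono ?_)
      rintro x hx
      rw [Set.mem_iUnion] at hx
      obtain ⟨i, hx⟩ := hx
      rw [Metric.mem_ball] at hx ⊢
      have hni : ‖(i : En n)‖ = ρ := hMsphere _ i.2
      calc dist x 0 ≤ dist x (i : En n) + dist (i : En n) 0 := dist_triangle _ _ _
        _ < r + ρ := by rw [dist_zero_right, hni]; linarith
        _ = ρ + r := by ring
  -- covering property from maximality
  have hcover : ∀ z : En n, ρ - r ≤ ‖z‖ → ‖z‖ ≤ ρ + r →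
      ∃ x ∈ M, dist z x < 3 * r := by
    intro z hz1 hz2
    have hz0 : 0 < ‖z‖ := lt_of_lt_of_le hb hz1
    set y : En n := (ρ / ‖z‖) • z with hy_def
    have hyρ : ‖y‖ = ρ := by
      rw [hy_def, norm_smul, Real.norm_eq_abs, abs_of_pos (div_pos hρ hz0),
        div_mul_cancel₀ _ hz0.ne']
    have hdzy : dist z y ≤ r := by
      have h1 : z - y = (1 - ρ / ‖z‖) • z := by rw [hy_def, sub_smul, one_smul]
      have h2 : (1 - ρ / ‖z‖) * ‖z‖ = ‖z‖ - ρ := by field_simp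
      have h3 : |1 - ρ / ‖z‖| * ‖z‖ = |‖z‖ - ρ| := by
        rw [← h2, abs_mul, abs_of_nonneg (norm_nonneg z)]
      rw [dist_eq_norm, h1, norm_smul, Real.norm_eq_abs, h3]
      rw [abs_le]
      constructor <;> linarith
    obtain ⟨x, hxM, hxy⟩ : ∃ x ∈ M, dist y x < 2 * r := by
      by_contra hcon
      push_neg at hcon
      have hyM : y ∉ M := by
        intro hyM
        have := hcon y hyM
        rw [dist_self] at this
        linarith
      have hins : insert y M ∈ S := by
        constructor
        · rintro x (rfl | hx)
          · exact hyρ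
          · exact hMsphere x hx
        · haveI : Std.Symm (fun x y : En n => 2 * r ≤ dist x y) := ⟨fun a b h => hsymm h⟩
          rw [Set.pairwise_insert_of_symm]
          exact ⟨hMsep, fun b hb hne => hcon b hb⟩
      exact hyM (hMmax hins (Set.subset_insert _ _) (Set.mem_insert _ _))
    refine ⟨x, hxM, ?_⟩
    calc dist z x ≤ dist z y + dist y x := dist_triangle _ _ _
      _ < r + 2 * r := by linarith
      _ = 3 * r := by ring
  -- cardinality lower bound via volume comparison
  set T : Finset (En n) := hMfin.toFinset with hT_def
  have hTM : (T : Set (En n)) = M := hMfin.coe_toFinset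
  refine ⟨T, fun x hx => hMsphere x (hMfin.mem_toFinset.mp hx),
    by rw [hTM]; exact hMsep, ?_⟩
  -- volume comparison
  set v : ℝ≥0∞ := volume (Metric.ball (0 : En n) 1) with hv_def
  have hv0 : v ≠ 0 := (Metric.measure_ball_pos volume 0 one_pos).ne'
  have hvtop : v ≠ ⊤ := measure_ball_lt_top.ne
  have hfr : Module.finrank ℝ (En n) = n := finrank_euclideanSpace_fin
  have hAsub : (Metric.closedBall (0 : En n) (ρ + r) \ Metric.ball 0 (ρ - r))
      ⊆ ⋃ x ∈ T, Metric.ball x (3 * r) := by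
    rintro z ⟨hz1, hz2⟩
    rw [Metric.mem_closedBall, dist_zero_right] at hz1
    rw [Metric.mem_ball, dist_zero_right, not_lt] at hz2
    obtain ⟨x, hxM, hx3⟩ := hcover z hz2 hz1
    exact Set.mem_biUnion (hMfin.mem_toFinset.mpr hxM) (Metric.mem_ball.mpr hx3)
  have hvol1 : volume (Metric.closedBall (0 : En n) (ρ + r) \ Metric.ball 0 (ρ - r))
      = ENNReal.ofReal ((ρ + r) ^ n) * v - ENNReal.ofReal ((ρ - r) ^ n) * v := by
    rw [measure_diff ((Metric.ball_subset_ball (by linarith)).trans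
        Metric.ball_subset_closedBall)
        measurableSet_ball.nullMeasurableSet measure_ball_lt_top.ne,
      Measure.addHaar_closedBall volume 0 (by linarith : (0:ℝ) ≤ ρ + r),
      Measure.addHaar_ball_of_pos volume 0 hb, hfr]
  have hvol2 : volume (⋃ x ∈ T, Metric.ball x (3 * r))
      ≤ (T.card : ℝ≥0∞) * (ENNReal.ofReal ((3 * r) ^ n) * v) := by
    refine (measure_biUnion_finset_le T _).trans ?_
    have hb3 : ∀ x ∈ T, volume (Metric.ball x (3 * r))
        = ENNReal.ofReal ((3 * r) ^ n) * v := by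
      intro x _
      rw [Measure.addHaar_ball_of_pos volume x (by linarith), hfr]
    rw [Finset.sum_congr rfl hb3, Finset.sum_const, nsmul_eq_mul]
  have hkey : ENNReal.ofReal ((ρ + r) ^ n - (ρ - r) ^ n)
      ≤ (T.card : ℝ≥0∞) * ENNReal.ofReal ((3 * r) ^ n) := by
    have h := (hvol1 ▸ (measure_mono hAsub)).trans hvol2
    rw [← ENNReal.sub_mul (fun _ _ => hvtop),
      ← ENNReal.ofReal_sub _ (by positivity), ← mul_assoc] at h
    exact (ENNReal.mul_le_mul_iff_left hv0 hvtop).mp h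
  have hcard : (ρ + r) ^ n - (ρ - r) ^ n ≤ (T.card : ℝ) * (3 * r) ^ n := by
    rw [← ENNReal.ofReal_natCast, ← ENNReal.ofReal_mul (by positivity)] at hkey
    exact (ENNReal.ofReal_le_ofReal_iff (by positivity)).mp hkey
  obtain ⟨m, rfl⟩ : ∃ m, n = m + 1 := ⟨n - 1, (Nat.succ_pred_eq_of_pos (by omega)).symm⟩
  have hm : (m + 1) - 1 = m := by omega
  have hlow : 2 * r * (ρ / 2) ^ m ≤ (ρ + r) ^ (m + 1) - (ρ - r) ^ (m + 1) := by
    have h1 : (ρ - r) ^ m ≤ (ρ + r) ^ m := by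
      apply pow_le_pow_left₀ hb.le; linarith
    have h2 : (ρ / 2) ^ m ≤ (ρ - r) ^ m := by
      apply pow_le_pow_left₀ (by positivity); linarith
    have e1 : (ρ + r) ^ (m + 1) = (ρ + r) * (ρ + r) ^ m := by ring
    have e2 : (ρ - r) ^ (m + 1) = (ρ - r) * (ρ - r) ^ m := by ring
    nlinarith [h1, h2]
  have h3r : (0:ℝ) < (3 * r) ^ (m + 1) := by positivity
  rw [hm, ← mul_le_mul_iff_left₀ h3r]
  have hx0 : (0:ℝ) ≤ ρ ^ m * r / 2 ^ (m + 1) := by positivity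
  calc (1 / 6 : ℝ) ^ (m + 1) * (ρ / r) ^ m * (3 * r) ^ (m + 1)
      = ρ ^ m * r / 2 ^ (m + 1) := by
        rw [div_pow, mul_pow, div_pow]
        have h6 : (6 : ℝ) ^ (m + 1) = 2 ^ (m + 1) * 3 ^ (m + 1) := by
          rw [← mul_pow]; norm_num
        field_simp [h6]
        rw [show (6:ℝ) = 2 * 3 by norm_num, mul_pow]
        ring
    _ ≤ 2 * r * (ρ / 2) ^ m := by
        have eR : 2 * r * (ρ / 2) ^ m = 4 * (ρ ^ m * r / 2 ^ (m + 1)) := by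
          rw [div_pow]
          field_simp
          ring
        linarith [hx0]
    _ ≤ (ρ + r) ^ (m + 1) - (ρ - r) ^ (m + 1) := hlow
    _ ≤ (T.card : ℝ) * (3 * r) ^ (m + 1) := hcard

lemma radial_ball_int {n : ℕ} (f : En n → ℂ)
    (hrad : ∀ x y : En n, ‖x‖ = ‖y‖ → f x = f y)
    {x₀ x₁ : En n} (h : ‖x₀‖ = ‖x₁‖) (r : ℝ) :
    ∫⁻ x in Metric.ball x₁ r, (‖f x‖₊ : ℝ≥0∞) ^ 2
      = ∫⁻ x in Metric.ball x₀ r, (‖f x‖₊ : ℝ≥0∞) ^ 2 := by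
  set e : En n ≃ₗᵢ[ℝ] En n := Submodule.reflection (ℝ ∙ (x₀ - x₁))ᗮ with he_def
  have he : e x₀ = x₁ := Submodule.reflection_sub h
  have hmp : MeasurePreserving e volume volume := e.measurePreserving
  have hemb : MeasurableEmbedding (e : En n → En n) :=
    e.toHomeomorph.measurableEmbedding
  have hpre : (e : En n → En n) ⁻¹' Metric.ball x₁ r = Metric.ball x₀ r := by
    ext x
    simp only [Set.mem_preimage, Metric.mem_ball, ← he, e.dist_map]
  calc ∫⁻ x in Metric.ball x₁ r, (‖f x‖₊ : ℝ≥0∞) ^ 2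
      = ∫⁻ x in (e : En n → En n) ⁻¹' Metric.ball x₁ r, (‖f (e x)‖₊ : ℝ≥0∞) ^ 2 :=
        (hmp.setLIntegral_comp_preimage_emb hemb _ _).symm
    _ = ∫⁻ x in Metric.ball x₀ r, (‖f x‖₊ : ℝ≥0∞) ^ 2 := by
        rw [hpre]
        refine lintegral_congr fun x => ?_
        rw [hrad (e x) x (e.norm_map x)]

/-- For a radial function, the `L²` mass of a thin annulus of radius `ρ` and width `2r`
dominates `c (ρ/r)^{n-1}` times the mass of any ball of radius `r` centered on the
sphere of radius `ρ`. -/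
theorem radial_annulus_mass (n : ℕ) (hn : 2 ≤ n) :
    ∃ c : ℝ, 0 < c ∧
      ∀ (f : En n → ℂ), Measurable f → (∀ x y : En n, ‖x‖ = ‖y‖ → f x = f y) →
      ∀ (ρ r : ℝ), 0 < ρ → 0 < r → r ≤ ρ / 2 →
      ∀ (x₀ : En n), ‖x₀‖ = ρ →
      ENNReal.ofReal (c * (ρ / r) ^ (n - 1)) *
          (∫⁻ x in Metric.ball x₀ r, (‖f x‖₊ : ℝ≥0∞) ^ 2)
        ≤ ∫⁻ x in {x : En n | ρ - r ≤ ‖x‖ ∧ ‖x‖ ≤ ρ + r}, (‖f x‖₊ : ℝ≥0∞) ^ 2 := by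
  refine ⟨(1 / 6 : ℝ) ^ n, by positivity, ?_⟩
  intro f hf hrad ρ r hρ hr hrρ x₀ hx₀
  obtain ⟨T, hTs, hTsep, hTcard⟩ := packing hn hρ hr hrρ
  set g : En n → ℝ≥0∞ := fun x => (‖f x‖₊ : ℝ≥0∞) ^ 2 with hg
  have hballsub : ∀ x ∈ T, Metric.ball x r ⊆
      {x : En n | ρ - r ≤ ‖x‖ ∧ ‖x‖ ≤ ρ + r} := by
    intro x hx z hz
    rw [Metric.mem_ball] at hz
    have hxρ := hTs x hx
    have h1 : |‖z‖ - ρ| < r := by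
      rw [← hxρ]
      exact lt_of_le_of_lt (by rw [dist_eq_norm] at hz ⊢; exact abs_norm_sub_norm_le z x) hz
    obtain ⟨ha, hb⟩ := abs_lt.mp h1
    exact ⟨by linarith, by linarith⟩
  have hdisjballs : (↑T : Set (En n)).PairwiseDisjoint fun x => Metric.ball x r := by
    intro x hx y hy hxy
    exact Metric.ball_disjoint_ball (by linarith [hTsep hx hy hxy])
  have hsum : ∫⁻ x in ⋃ y ∈ T, Metric.ball y r, g x
      = ∑ y ∈ T, ∫⁻ x in Metric.ball y r, g x :=
    lintegral_biUnion_finset hdisjballs (fun _ _ => measurableSet_ball) g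
  have heach : ∀ y ∈ T, ∫⁻ x in Metric.ball y r, g x = ∫⁻ x in Metric.ball x₀ r, g x :=
    fun y hy => radial_ball_int f hrad (by rw [hx₀, hTs y hy]) r
  have hsum2 : ∫⁻ x in ⋃ y ∈ T, Metric.ball y r, g x
      = (T.card : ℝ≥0∞) * ∫⁻ x in Metric.ball x₀ r, g x := by
    rw [hsum, Finset.sum_congr rfl heach, Finset.sum_const, nsmul_eq_mul]
  have hmono : ∫⁻ x in ⋃ y ∈ T, Metric.ball y r, g x
      ≤ ∫⁻ x in {x : En n | ρ - r ≤ ‖x‖ ∧ ‖x‖ ≤ ρ + r}, g x :=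
    lintegral_mono_set (Set.iUnion₂_subset hballsub)
  rw [hsum2] at hmono
  refine le_trans (mul_le_mul_left ?_ _) hmono
  calc ENNReal.ofReal ((1 / 6 : ℝ) ^ n * (ρ / r) ^ (n - 1))
      ≤ ENNReal.ofReal ((T.card : ℝ)) := ENNReal.ofReal_le_ofReal hTcard
    _ = (T.card : ℝ≥0∞) := ENNReal.ofReal_natCast _


end
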